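/- (Closed form for the isotropic fourth-moment term.) Let m ≥ 2 be an integer, let μ be the Haar probability measure on the real orthogonal group O(m), and let A and B be m×m real diagonal matrices with diagonal entries a_1,…,a_m and b_1,…,b_m. Write S_a = Σ_i a_i, S_{a²} = Σ_i a_i², and similarly S_b, S_{b²}. Then ∫_{O(m)} Tr((A Qᵀ B Q)²) dμ(Q) = [ 3·S_{a²}·S_{b²} + S_{a²}·(S_b² − S_{b²}) + S_{b²}·(S_a² − S_{a²}) − (S_a² − S_{a²})(S_b² − S_{b²})/(m−1) ] / (m(m+2)). -/

import Mathlib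

open MeasureTheory Matrix Finset

namespace IsoAux

abbrev QS (m : ℕ) := Fin m → Fin m → ℝ

/-- digested hypotheses -/
structure Good (m : ℕ) (μ : Measure (QS m)) : Prop where
  prob : IsProbabilityMeasure μ
  hae : ∀ᵐ Q ∂μ, ∀ i j : Fin m, ∑ k, Q k i * Q k j = (if i = j then (1:ℝ) else 0)
  hinv : ∀ P : Matrix (Fin m) (Fin m) ℝ, Pᵀ * P = 1 →
    ∀ f : QS m → ℝ, Measurable f →
      ∫ Q, f (fun r i => ∑ s, P r s * Q s i) ∂μ = ∫ Q, f Q ∂μ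

variable {m : ℕ} {μ : Measure (QS m)}

lemma ae_abs (h : Good m μ) : ∀ᵐ Q ∂μ, ∀ k i : Fin m, |Q k i| ≤ 1 := by
  filter_upwards [h.hae] with Q hQ k i
  have h1 := hQ i i
  simp only [if_true, eq_self_iff_true] at h1
  have h2 : Q k i * Q k i ≤ 1 := by
    rw [← h1]
    exact Finset.single_le_sum (f := fun j => Q j i * Q j i) (fun j _ => mul_self_nonneg _) (Finset.mem_univ k)
  exact abs_le_one_iff_mul_self_le_one.2 h2

lemma abs_mul_le_one {x y : ℝ} (hx : |x| ≤ 1) (hy : |y| ≤ 1) : |x * y| ≤ 1 := by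
  rw [abs_mul]
  exact mul_le_one₀ hx (abs_nonneg _) hy

lemma int4 (h : Good m μ) (k₁ i₁ k₂ i₂ k₃ i₃ k₄ i₄ : Fin m) :
    Integrable (fun Q : QS m => Q k₁ i₁ * Q k₂ i₂ * Q k₃ i₃ * Q k₄ i₄) μ := by
  haveI := h.prob
  apply Integrable.mono' (integrable_const (1:ℝ)) (Measurable.aestronglyMeasurable (by fun_prop))
  filter_upwards [ae_abs h] with Q hQ
  rw [Real.norm_eq_abs]
  exact abs_mul_le_one (abs_mul_le_one (abs_mul_le_one (hQ k₁ i₁) (hQ k₂ i₂)) (hQ k₃ i₃)) (hQ k₄ i₄)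

lemma int2 (h : Good m μ) (k₁ i₁ k₂ i₂ : Fin m) :
    Integrable (fun Q : QS m => Q k₁ i₁ * Q k₂ i₂) μ := by
  haveI := h.prob
  apply Integrable.mono' (integrable_const (1:ℝ)) (Measurable.aestronglyMeasurable (by fun_prop))
  filter_upwards [ae_abs h] with Q hQ
  rw [Real.norm_eq_abs]
  exact abs_mul_le_one (hQ k₁ i₁) (hQ k₂ i₂)

/-- sign flip matrix -/
def sgn (m : ℕ) (t : Fin m) : Matrix (Fin m) (Fin m) ℝ :=
  Matrix.diagonal (fun r => if r = t then -1 else 1)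

lemma sgn_orth (t : Fin m) : (sgn m t)ᵀ * sgn m t = 1 := by
  rw [sgn, diagonal_transpose, diagonal_mul_diagonal]
  have : (fun r : Fin m => (if r = t then (-1:ℝ) else 1) * (if r = t then -1 else 1)) = fun _ => 1 := by
    funext r; split_ifs <;> ring
  rw [this, diagonal_one]

lemma sgn_sum (t : Fin m) (Q : QS m) :
    (fun r i => ∑ s, sgn m t r s * Q s i) = fun r i => (if r = t then -1 else 1) * Q r i := by
  funext r i
  simp [sgn, diagonal_apply, ite_mul, Finset.sum_ite_eq]

/-- the key odd-moment killer -/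
lemma odd_zero (h : Good m μ) (t : Fin m) (f : QS m → ℝ) (hf : Measurable f)
    (hodd : ∀ Q : QS m, f (fun r i => (if r = t then (-1:ℝ) else 1) * Q r i) = - f Q) :
    ∫ Q, f Q ∂μ = 0 := by
  have h1 := h.hinv (sgn m t) (sgn_orth t) f hf
  simp only [sgn_sum t] at h1
  simp only [hodd, integral_neg] at h1
  linarith


noncomputable def cc : ℝ := (Real.sqrt 2)⁻¹

lemma cc_sq : cc * cc = 1/2 := by
  rw [cc, ← mul_inv, Real.mul_self_sqrt (by norm_num : (0:ℝ) ≤ 2)]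
  norm_num

/-- rotation by 45 degrees in the (k,l) plane -/
noncomputable def rotM (m : ℕ) (k l : Fin m) : Matrix (Fin m) (Fin m) ℝ :=
  Matrix.of fun r s =>
    if r = k then (if s = k then cc else if s = l then cc else 0)
    else if r = l then (if s = k then -cc else if s = l then cc else 0)
    else if s = r then 1 else 0

lemma sum_split {k l : Fin m} (hkl : k ≠ l) (F : Fin m → ℝ) :
    ∑ r, F r = F k + F l + ∑ r ∈ (univ.erase k).erase l, F r := by
  rw [add_assoc, Finset.add_sum_erase _ F (Finset.mem_erase.2 ⟨hkl.symm, Finset.mem_univ l⟩),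
    Finset.add_sum_erase _ F (Finset.mem_univ k)]

lemma rotM_orth {k l : Fin m} (hkl : k ≠ l) : (rotM m k l)ᵀ * rotM m k l = 1 := by
  ext i j
  rw [Matrix.mul_apply]
  simp only [transpose_apply, rotM, Matrix.of_apply]
  rw [sum_split hkl]
  rw [if_pos rfl, if_neg hkl.symm, if_pos rfl]
  have htail : ∑ r ∈ (univ.erase k).erase l,
      ((if r = k then (if i = k then cc else if i = l then cc else 0)
        else if r = l then (if i = k then -cc else if i = l then cc else 0)
        else if i = r then 1 else 0) *
       (if r = k then (if j = k then cc else if j = l then cc else 0)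
        else if r = l then (if j = k then -cc else if j = l then cc else 0)
        else if j = r then 1 else 0)) =
      ∑ r ∈ (univ.erase k).erase l, (if i = r then (1:ℝ) else 0) * (if j = r then 1 else 0) := by
    apply Finset.sum_congr rfl
    intro r hr
    simp only [Finset.mem_erase] at hr
    rw [if_neg hr.2.1, if_neg hr.1, if_neg hr.2.1, if_neg hr.1]
  rw [htail]
  have h2 : ∑ r ∈ (univ.erase k).erase l, (if i = r then (1:ℝ) else 0) * (if j = r then 1 else 0)
      = if i = j ∧ i ≠ k ∧ i ≠ l then 1 else 0 := by
    have hfun : ∀ x : Fin m, (if i = x then (1:ℝ) else 0) * (if j = x then 1 else 0)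
        = if i = x then (if j = x then (1:ℝ) else 0) else 0 := by
      intro x; split_ifs <;> ring
    simp only [hfun]
    rw [Finset.sum_ite_eq]
    simp only [Finset.mem_erase, Finset.mem_univ, and_true]
    clear htail
    by_cases h1 : i = j <;> by_cases h2 : i = k <;> by_cases h3 : i = l <;>
      simp_all [eq_comm]
  rw [h2, Matrix.one_apply]
  clear htail h2
  have hc := cc_sq
  by_cases h1 : i = k <;> by_cases h2 : j = k <;> by_cases h3 : i = l <;> by_cases h4 : j = l <;>
    simp_all [hkl, Ne.symm hkl] <;>
      first
        | rfl
        | (rw [if_neg (Ne.symm h2)])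
        | (rw [if_neg (Ne.symm h4)])
        | (exact fun hh => h2 hh.symm)
        | (exact fun hh => h4 hh.symm)
        | nlinarith [cc_sq]


variable {μ : Measure (QS m)}

/-- the substituted configuration after rotation -/
noncomputable def rsub (k l : Fin m) (Q : QS m) : QS m := fun r i =>
  if r = k then cc * Q k i + cc * Q l i
  else if r = l then cc * Q l i - cc * Q k i
  else Q r i

lemma rotM_sum {k l : Fin m} (hkl : k ≠ l) (Q : QS m) :
    (fun r i => ∑ s, rotM m k l r s * Q s i) = rsub k l Q := by
  funext r i
  by_cases hr : r = k
  · subst hr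
    have hpt : ∀ s, rotM m r l r s * Q s i
        = (if s = r then cc * Q s i else 0) + (if s = l then cc * Q s i else 0) := by
      intro s
      simp only [rotM]
      simp only [Matrix.of_apply, if_pos rfl]
      by_cases h1 : s = r <;> by_cases h2 : s = l
      · exact absurd (h1.symm.trans h2) hkl
      · simp [h1, h2, hkl, Ne.symm hkl]
      · simp [h1, h2, hkl, Ne.symm hkl]
      · simp [h1, h2, hkl, Ne.symm hkl]
    simp only [hpt, Finset.sum_add_distrib, Finset.sum_ite_eq', Finset.mem_univ, if_true]
    rw [rsub]
    simp
  · by_cases hr' : r = l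
    · subst hr'
      have hpt : ∀ s, rotM m k r r s * Q s i
          = (if s = k then -(cc * Q s i) else 0) + (if s = r then cc * Q s i else 0) := by
        intro s
        simp only [rotM]
        simp only [Matrix.of_apply, if_neg (Ne.symm hkl), if_pos rfl]
        by_cases h1 : s = k <;> by_cases h2 : s = r
        · exact absurd (h1.symm.trans h2) hkl
        · simp [h1, h2, hkl, Ne.symm hkl]
        · simp [h1, h2, hkl, Ne.symm hkl]
        · simp [h1, h2, hkl, Ne.symm hkl]
      simp only [hpt, Finset.sum_add_distrib, Finset.sum_ite_eq', Finset.mem_univ, if_true]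
      rw [rsub]
      simp [Ne.symm hkl]
      ring
    · have hpt : ∀ s, rotM m k l r s * Q s i = (if s = r then Q s i else 0) := by
        intro s
        simp only [rotM]
        simp only [Matrix.of_apply, if_neg hr, if_neg hr']
        by_cases h1 : s = r <;> simp [h1]
      simp only [hpt, Finset.sum_ite_eq', Finset.mem_univ, if_true]
      rw [rsub]
      simp [hr, hr']

lemma rsub_k {k l : Fin m} (Q : QS m) (i : Fin m) :
    rsub k l Q k i = cc * Q k i + cc * Q l i := by simp [rsub]

lemma rsub_l {k l : Fin m} (hkl : k ≠ l) (Q : QS m) (i : Fin m) :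
    rsub k l Q l i = cc * Q l i - cc * Q k i := by simp [rsub, Ne.symm hkl]

lemma rsub_o {k l r : Fin m} (hr : r ≠ k) (hr' : r ≠ l) (Q : QS m) (i : Fin m) :
    rsub k l Q r i = Q r i := by simp [rsub, hr, hr']

variable {μ : Measure (QS m)}


lemma rot_inv (h : Good m μ) {k l : Fin m} (hkl : k ≠ l) (f : QS m → ℝ) (hf : Measurable f) :
    ∫ Q, f (rsub k l Q) ∂μ = ∫ Q, f Q ∂μ := by
  have h1 := h.hinv (rotM m k l) (rotM_orth hkl) f hf
  simp only [rotM_sum hkl] at h1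
  exact h1

lemma int_add {f g : QS m → ℝ} (hf : Integrable f μ) (hg : Integrable g μ) :
    Integrable (fun Q => f Q + g Q) μ := hf.add hg

lemma int_cmul {f : QS m → ℝ} (hf : Integrable f μ) (c : ℝ) :
    Integrable (fun Q => c * f Q) μ := hf.const_mul c

lemma isplit2 (g1 g2 : QS m → ℝ) (h1 : Integrable g1 μ) (h2 : Integrable g2 μ) (c1 c2 : ℝ) :
    ∫ Q, (c1 * g1 Q + c2 * g2 Q) ∂μ = c1 * ∫ Q, g1 Q ∂μ + c2 * ∫ Q, g2 Q ∂μ := by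
  rw [integral_add (int_cmul h1 c1) (int_cmul h2 c2), integral_const_mul, integral_const_mul]

lemma isplit3 (g1 g2 g3 : QS m → ℝ) (h1 : Integrable g1 μ) (h2 : Integrable g2 μ)
    (h3 : Integrable g3 μ) (c1 c2 c3 : ℝ) :
    ∫ Q, (c1 * g1 Q + c2 * g2 Q + c3 * g3 Q) ∂μ
      = c1 * ∫ Q, g1 Q ∂μ + c2 * ∫ Q, g2 Q ∂μ + c3 * ∫ Q, g3 Q ∂μ := by
  rw [integral_add (int_add (int_cmul h1 c1) (int_cmul h2 c2)) (int_cmul h3 c3),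
    isplit2 g1 g2 h1 h2, integral_const_mul]

lemma isplit5 (g1 g2 g3 g4 g5 : QS m → ℝ) (h1 : Integrable g1 μ) (h2 : Integrable g2 μ)
    (h3 : Integrable g3 μ) (h4 : Integrable g4 μ) (h5 : Integrable g5 μ) (c1 c2 c3 c4 c5 : ℝ) :
    ∫ Q, (c1 * g1 Q + c2 * g2 Q + c3 * g3 Q + c4 * g4 Q + c5 * g5 Q) ∂μ
      = c1 * ∫ Q, g1 Q ∂μ + c2 * ∫ Q, g2 Q ∂μ + c3 * ∫ Q, g3 Q ∂μ + c4 * ∫ Q, g4 Q ∂μ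
        + c5 * ∫ Q, g5 Q ∂μ := by
  rw [integral_add (int_add (int_add (int_add (int_cmul h1 c1) (int_cmul h2 c2)) (int_cmul h3 c3))
      (int_cmul h4 c4)) (int_cmul h5 c5),
    integral_add (int_add (int_add (int_cmul h1 c1) (int_cmul h2 c2)) (int_cmul h3 c3))
      (int_cmul h4 c4),
    isplit3 g1 g2 g3 h1 h2 h3, integral_const_mul, integral_const_mul]

lemma isplit9 (g1 g2 g3 g4 g5 g6 g7 g8 g9 : QS m → ℝ)
    (h1 : Integrable g1 μ) (h2 : Integrable g2 μ) (h3 : Integrable g3 μ) (h4 : Integrable g4 μ)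
    (h5 : Integrable g5 μ) (h6 : Integrable g6 μ) (h7 : Integrable g7 μ) (h8 : Integrable g8 μ)
    (h9 : Integrable g9 μ) (c1 c2 c3 c4 c5 c6 c7 c8 c9 : ℝ) :
    ∫ Q, (c1 * g1 Q + c2 * g2 Q + c3 * g3 Q + c4 * g4 Q + c5 * g5 Q + c6 * g6 Q + c7 * g7 Q
        + c8 * g8 Q + c9 * g9 Q) ∂μ
      = c1 * ∫ Q, g1 Q ∂μ + c2 * ∫ Q, g2 Q ∂μ + c3 * ∫ Q, g3 Q ∂μ + c4 * ∫ Q, g4 Q ∂μ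
        + c5 * ∫ Q, g5 Q ∂μ + c6 * ∫ Q, g6 Q ∂μ + c7 * ∫ Q, g7 Q ∂μ + c8 * ∫ Q, g8 Q ∂μ
        + c9 * ∫ Q, g9 Q ∂μ := by
  have i5 : Integrable (fun Q => c1 * g1 Q + c2 * g2 Q + c3 * g3 Q + c4 * g4 Q + c5 * g5 Q) μ :=
    int_add (int_add (int_add (int_add (int_cmul h1 c1) (int_cmul h2 c2)) (int_cmul h3 c3))
      (int_cmul h4 c4)) (int_cmul h5 c5)
  have i4 : Integrable (fun Q => c6 * g6 Q + c7 * g7 Q + c8 * g8 Q + c9 * g9 Q) μ :=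
    int_add (int_add (int_add (int_cmul h6 c6) (int_cmul h7 c7)) (int_cmul h8 c8)) (int_cmul h9 c9)
  rw [show (fun Q => c1 * g1 Q + c2 * g2 Q + c3 * g3 Q + c4 * g4 Q + c5 * g5 Q + c6 * g6 Q
      + c7 * g7 Q + c8 * g8 Q + c9 * g9 Q)
    = fun Q => (c1 * g1 Q + c2 * g2 Q + c3 * g3 Q + c4 * g4 Q + c5 * g5 Q)
      + (c6 * g6 Q + c7 * g7 Q + c8 * g8 Q + c9 * g9 Q) from funext fun Q => by ring]
  rw [integral_add i5 i4]
  rw [isplit5 g1 g2 g3 g4 g5 h1 h2 h3 h4 h5]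
  rw [integral_add (int_add (int_add (int_cmul h6 c6) (int_cmul h7 c7)) (int_cmul h8 c8))
      (int_cmul h9 c9),
    isplit3 g6 g7 g8 h6 h7 h8, integral_const_mul]
  ring


lemma odd_zero4 (h : Good m μ) (t : Fin m) (k₁ i₁ k₂ i₂ k₃ i₃ k₄ i₄ : Fin m)
    (hodd : ((if k₁ = t then (-1:ℝ) else 1) * (if k₂ = t then -1 else 1) *
      (if k₃ = t then -1 else 1) * (if k₄ = t then -1 else 1)) = -1) :
    ∫ Q, Q k₁ i₁ * Q k₂ i₂ * Q k₃ i₃ * Q k₄ i₄ ∂μ = 0 := by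
  apply odd_zero h t _ (by fun_prop)
  intro Q
  simp only
  have : ((if k₁ = t then (-1:ℝ) else 1) * Q k₁ i₁) * ((if k₂ = t then (-1:ℝ) else 1) * Q k₂ i₂) *
      ((if k₃ = t then (-1:ℝ) else 1) * Q k₃ i₃) * ((if k₄ = t then (-1:ℝ) else 1) * Q k₄ i₄)
      = ((if k₁ = t then (-1:ℝ) else 1) * (if k₂ = t then -1 else 1) *
        (if k₃ = t then -1 else 1) * (if k₄ = t then -1 else 1)) *
        (Q k₁ i₁ * Q k₂ i₂ * Q k₃ i₃ * Q k₄ i₄) := by ring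
  rw [this, hodd]
  ring

lemma odd_zero2 (h : Good m μ) (t : Fin m) (k₁ i₁ k₂ i₂ : Fin m)
    (hodd : ((if k₁ = t then (-1:ℝ) else 1) * (if k₂ = t then -1 else 1)) = -1) :
    ∫ Q, Q k₁ i₁ * Q k₂ i₂ ∂μ = 0 := by
  apply odd_zero h t _ (by fun_prop)
  intro Q
  simp only
  have : ((if k₁ = t then (-1:ℝ) else 1) * Q k₁ i₁) * ((if k₂ = t then (-1:ℝ) else 1) * Q k₂ i₂)
      = ((if k₁ = t then (-1:ℝ) else 1) * (if k₂ = t then -1 else 1)) * (Q k₁ i₁ * Q k₂ i₂) := by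
    ring
  rw [this, hodd]
  ring

lemma m4_rel (h : Good m μ) {k l : Fin m} (hkl : k ≠ l) (i : Fin m) :
    (∫ Q, Q k i * Q k i * Q k i * Q k i ∂μ) = (∫ Q, Q l i * Q l i * Q l i * Q l i ∂μ) ∧
    (∫ Q, Q k i * Q k i * Q k i * Q k i ∂μ) = 3 * ∫ Q, Q k i * Q k i * Q l i * Q l i ∂μ := by
  have z1 : ∫ Q, Q k i * Q k i * Q k i * Q l i ∂μ = 0 :=
    odd_zero4 h l k i k i k i l i (by simp [hkl])
  have z2 : ∫ Q, Q k i * Q l i * Q l i * Q l i ∂μ = 0 :=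
    odd_zero4 h k k i l i l i l i (by simp [Ne.symm hkl])
  have e1 := rot_inv h hkl (fun Q => Q k i * Q k i * Q k i * Q k i) (by fun_prop)
  have e2 := rot_inv h hkl (fun Q => Q l i * Q l i * Q l i * Q l i) (by fun_prop)
  simp only [rsub_k, rsub_l hkl] at e1 e2
  have hid1 : ∀ Q : QS m, (cc * Q k i + cc * Q l i) * (cc * Q k i + cc * Q l i) *
      (cc * Q k i + cc * Q l i) * (cc * Q k i + cc * Q l i)
      = (1/4) * (Q k i * Q k i * Q k i * Q k i) + 1 * (Q k i * Q k i * Q k i * Q l i)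
        + (3/2) * (Q k i * Q k i * Q l i * Q l i) + 1 * (Q k i * Q l i * Q l i * Q l i)
        + (1/4) * (Q l i * Q l i * Q l i * Q l i) := by
    intro Q
    linear_combination ((cc * cc + 1/2) * (Q k i + Q l i)^4) * cc_sq
  have hid2 : ∀ Q : QS m, (cc * Q l i - cc * Q k i) * (cc * Q l i - cc * Q k i) *
      (cc * Q l i - cc * Q k i) * (cc * Q l i - cc * Q k i)
      = (1/4) * (Q k i * Q k i * Q k i * Q k i) + (-1) * (Q k i * Q k i * Q k i * Q l i)
        + (3/2) * (Q k i * Q k i * Q l i * Q l i) + (-1) * (Q k i * Q l i * Q l i * Q l i)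
        + (1/4) * (Q l i * Q l i * Q l i * Q l i) := by
    intro Q
    linear_combination ((cc * cc + 1/2) * (Q l i - Q k i)^4) * cc_sq
  simp only [hid1] at e1
  simp only [hid2] at e2
  rw [isplit5 _ _ _ _ _ (int4 h k i k i k i k i) (int4 h k i k i k i l i)
    (int4 h k i k i l i l i) (int4 h k i l i l i l i) (int4 h l i l i l i l i)] at e1
  rw [isplit5 _ _ _ _ _ (int4 h k i k i k i k i) (int4 h k i k i k i l i)
    (int4 h k i k i l i l i) (int4 h k i l i l i l i) (int4 h l i l i l i l i)] at e2
  rw [z1, z2] at e1 e2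
  constructor <;> linarith

lemma sum_one (h : Good m μ) (i : Fin m) :
    ∑ k, ∑ l, ∫ Q, Q k i * Q k i * Q l i * Q l i ∂μ = 1 := by
  haveI := h.prob
  have hone : ∀ᵐ Q ∂μ, (∑ k, ∑ l, Q k i * Q k i * Q l i * Q l i) = 1 := by
    filter_upwards [h.hae] with Q hQ
    have hQi := hQ i i
    rw [if_pos rfl] at hQi
    have hprod : (∑ k, ∑ l, Q k i * Q k i * Q l i * Q l i)
        = (∑ k, Q k i * Q k i) * (∑ l, Q l i * Q l i) := by
      rw [Finset.sum_mul_sum]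
      exact Finset.sum_congr rfl fun k _ => Finset.sum_congr rfl fun l _ => by ring
    rw [hprod, hQi, one_mul]
  have key : ∫ Q, (∑ k, ∑ l, Q k i * Q k i * Q l i * Q l i) ∂μ = 1 := by
    rw [integral_congr_ae hone]
    simp
  rw [integral_finset_sum _ (fun k _ => integrable_finset_sum _
    (fun l _ => int4 h k i k i l i l i))] at key
  have k2 : ∀ k : Fin m, ∫ Q, (∑ l, Q k i * Q k i * Q l i * Q l i) ∂μ
      = ∑ l, ∫ Q, Q k i * Q k i * Q l i * Q l i ∂μ :=
    fun k => integral_finset_sum _ (fun l _ => int4 h k i k i l i l i)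
  simp only [k2] at key
  exact key

lemma m4_val (h : Good m μ) (hm : 2 ≤ m) (i k : Fin m) :
    ∫ Q, Q k i * Q k i * Q k i * Q k i ∂μ = 3 / ((m:ℝ) * ((m:ℝ) + 2)) := by
  have hM : ∀ k' : Fin m, ∫ Q, Q k' i * Q k' i * Q k' i * Q k' i ∂μ
      = ∫ Q, Q k i * Q k i * Q k i * Q k i ∂μ := by
    intro k'
    by_cases hk : k' = k
    · rw [hk]
    · exact (m4_rel h hk i).1
  set M : ℝ := ∫ Q, Q k i * Q k i * Q k i * Q k i ∂μ with hMdef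
  have hs := sum_one h i
  have hinner : ∀ k' : Fin m, ∑ l, ∫ Q, Q k' i * Q k' i * Q l i * Q l i ∂μ
      = M + ((m:ℝ) - 1) * (M / 3) := by
    intro k'
    rw [← Finset.add_sum_erase _ _ (Finset.mem_univ k')]
    have hoff : ∑ l ∈ univ.erase k', ∫ Q, Q k' i * Q k' i * Q l i * Q l i ∂μ
        = ((m:ℝ) - 1) * (M / 3) := by
      rw [Finset.sum_congr rfl (fun l hl => show ∫ Q, Q k' i * Q k' i * Q l i * Q l i ∂μ
          = M / 3 by
        have h2 := (m4_rel h (Ne.symm (Finset.mem_erase.1 hl).1) i).2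
        rw [hM k'] at h2
        linarith)]
      rw [Finset.sum_const, Finset.card_erase_of_mem (Finset.mem_univ k'),
        Finset.card_univ, Fintype.card_fin, nsmul_eq_mul]
      push_cast [Nat.cast_sub (by omega : 1 ≤ m)]
      ring
    rw [hoff, hM k']
  rw [Finset.sum_congr rfl (fun k' _ => hinner k'), Finset.sum_const, Finset.card_univ,
    Fintype.card_fin, nsmul_eq_mul] at hs
  have hm' : (2:ℝ) ≤ (m:ℝ) := by exact_mod_cast hm
  have hne : (m:ℝ) ≠ 0 := by linarith
  have hne2 : (m:ℝ) + 2 ≠ 0 := by linarith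
  rw [eq_div_iff (mul_ne_zero hne hne2)]
  linear_combination 3 * hs

lemma c22_val (h : Good m μ) (hm : 2 ≤ m) {k l : Fin m} (hkl : k ≠ l) (i : Fin m) :
    ∫ Q, Q k i * Q k i * Q l i * Q l i ∂μ = 1 / ((m:ℝ) * ((m:ℝ) + 2)) := by
  have h1 := (m4_rel h hkl i).2
  rw [m4_val h hm i k] at h1
  have hm' : (2:ℝ) ≤ (m:ℝ) := by exact_mod_cast hm
  have hne : (m:ℝ) ≠ 0 := by linarith
  have hne2 : (m:ℝ) + 2 ≠ 0 := by linarith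
  rw [eq_div_iff (mul_ne_zero hne hne2)]
  rw [div_eq_iff (mul_ne_zero hne hne2)] at h1
  linarith

lemma isplit4 (g1 g2 g3 g4 : QS m → ℝ) (h1 : Integrable g1 μ) (h2 : Integrable g2 μ)
    (h3 : Integrable g3 μ) (h4 : Integrable g4 μ) (c1 c2 c3 c4 : ℝ) :
    ∫ Q, (c1 * g1 Q + c2 * g2 Q + c3 * g3 Q + c4 * g4 Q) ∂μ
      = c1 * ∫ Q, g1 Q ∂μ + c2 * ∫ Q, g2 Q ∂μ + c3 * ∫ Q, g3 Q ∂μ + c4 * ∫ Q, g4 Q ∂μ := by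
  rw [integral_add (int_add (int_add (int_cmul h1 c1) (int_cmul h2 c2)) (int_cmul h3 c3))
      (int_cmul h4 c4),
    isplit3 g1 g2 g3 h1 h2 h3, integral_const_mul]

lemma m2_val (h : Good m μ) (hm : 2 ≤ m) (k i : Fin m) :
    ∫ Q, Q k i * Q k i ∂μ = 1 / (m:ℝ) := by
  have hrel : ∀ k' l' : Fin m, k' ≠ l' →
      ∫ Q, Q k' i * Q k' i ∂μ = ∫ Q, Q l' i * Q l' i ∂μ := by
    intro k' l' hkl
    have z1 : ∫ Q, Q k' i * Q l' i ∂μ = 0 := odd_zero2 h l' k' i l' i (by simp [hkl])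
    have e1 := rot_inv h hkl (fun Q => Q k' i * Q k' i) (by fun_prop)
    simp only [rsub_k] at e1
    have hid : ∀ Q : QS m, (cc * Q k' i + cc * Q l' i) * (cc * Q k' i + cc * Q l' i)
        = (1/2) * (Q k' i * Q k' i) + 1 * (Q k' i * Q l' i) + (1/2) * (Q l' i * Q l' i) := by
      intro Q
      linear_combination ((Q k' i + Q l' i)^2) * cc_sq
    simp only [hid] at e1
    rw [isplit3 _ _ _ (int2 h k' i k' i) (int2 h k' i l' i) (int2 h l' i l' i)] at e1
    rw [z1] at e1
    linarith
  have hM : ∀ k' : Fin m, ∫ Q, Q k' i * Q k' i ∂μ = ∫ Q, Q k i * Q k i ∂μ := by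
    intro k'
    by_cases hk : k' = k
    · rw [hk]
    · exact hrel k' k hk
  haveI := h.prob
  have hone : ∀ᵐ Q ∂μ, (∑ k', Q k' i * Q k' i) = 1 := by
    filter_upwards [h.hae] with Q hQ
    have := hQ i i
    rwa [if_pos rfl] at this
  have key : ∑ k', ∫ Q, Q k' i * Q k' i ∂μ = 1 := by
    rw [← integral_finset_sum _ (fun k' _ => int2 h k' i k' i), integral_congr_ae hone]
    simp
  rw [Finset.sum_congr rfl (fun k' _ => hM k'), Finset.sum_const, Finset.card_univ,
    Fintype.card_fin, nsmul_eq_mul] at key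
  have hm' : (2:ℝ) ≤ (m:ℝ) := by exact_mod_cast hm
  have hne : (m:ℝ) ≠ 0 := by linarith
  rw [eq_div_iff hne]
  linarith

section TwoCol

variable (h : Good m μ) {i j : Fin m} (k l : Fin m)

/-- the nine-term rotation identities for two columns -/
lemma two_col_rels (h : Good m μ) (i j : Fin m) {k l : Fin m} (hkl : k ≠ l) :
    (∫ Q, Q k i * Q k i * Q k j * Q k j ∂μ) = (∫ Q, Q l i * Q l i * Q l j * Q l j ∂μ) ∧
    (∫ Q, Q k i * Q k i * Q l j * Q l j ∂μ) = (∫ Q, Q l i * Q l i * Q k j * Q k j ∂μ) ∧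
    (∫ Q, Q k i * Q k i * Q k j * Q k j ∂μ)
      = (∫ Q, Q k i * Q k i * Q l j * Q l j ∂μ)
        + 2 * (∫ Q, Q k i * Q k j * Q l i * Q l j ∂μ) := by
  have z2 : ∫ Q, Q k i * Q k i * Q k j * Q l j ∂μ = 0 :=
    odd_zero4 h l k i k i k j l j (by simp [hkl])
  have z4 : ∫ Q, Q k i * Q l i * Q k j * Q k j ∂μ = 0 :=
    odd_zero4 h l k i l i k j k j (by simp [hkl])
  have z6 : ∫ Q, Q k i * Q l i * Q l j * Q l j ∂μ = 0 :=
    odd_zero4 h k k i l i l j l j (by simp [Ne.symm hkl])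
  have z8 : ∫ Q, Q l i * Q l i * Q k j * Q l j ∂μ = 0 :=
    odd_zero4 h k l i l i k j l j (by simp [Ne.symm hkl])
  have ints := fun (a b c d e f g h' : Fin m) => int4 h a b c d e f g h'
  have eA := rot_inv h hkl (fun Q => Q k i * Q k i * Q k j * Q k j) (by fun_prop)
  have eB := rot_inv h hkl (fun Q => Q l i * Q l i * Q l j * Q l j) (by fun_prop)
  have eC := rot_inv h hkl (fun Q => Q k i * Q k i * Q l j * Q l j) (by fun_prop)
  have eD := rot_inv h hkl (fun Q => Q l i * Q l i * Q k j * Q k j) (by fun_prop)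
  simp only [rsub_k, rsub_l hkl] at eA eB eC eD
  have hidA : ∀ Q : QS m, (cc * Q k i + cc * Q l i) * (cc * Q k i + cc * Q l i) *
      (cc * Q k j + cc * Q l j) * (cc * Q k j + cc * Q l j)
      = (1/4) * (Q k i * Q k i * Q k j * Q k j) + (1/2) * (Q k i * Q k i * Q k j * Q l j)
        + (1/4) * (Q k i * Q k i * Q l j * Q l j) + (1/2) * (Q k i * Q l i * Q k j * Q k j)
        + 1 * (Q k i * Q k j * Q l i * Q l j) + (1/2) * (Q k i * Q l i * Q l j * Q l j)
        + (1/4) * (Q l i * Q l i * Q k j * Q k j) + (1/2) * (Q l i * Q l i * Q k j * Q l j)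
        + (1/4) * (Q l i * Q l i * Q l j * Q l j) := by
    intro Q
    linear_combination ((cc * cc + 1/2) * ((Q k i + Q l i) * (Q k j + Q l j))^2) * cc_sq
  have hidB : ∀ Q : QS m, (cc * Q l i - cc * Q k i) * (cc * Q l i - cc * Q k i) *
      (cc * Q l j - cc * Q k j) * (cc * Q l j - cc * Q k j)
      = (1/4) * (Q k i * Q k i * Q k j * Q k j) + (-(1/2)) * (Q k i * Q k i * Q k j * Q l j)
        + (1/4) * (Q k i * Q k i * Q l j * Q l j) + (-(1/2)) * (Q k i * Q l i * Q k j * Q k j)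
        + 1 * (Q k i * Q k j * Q l i * Q l j) + (-(1/2)) * (Q k i * Q l i * Q l j * Q l j)
        + (1/4) * (Q l i * Q l i * Q k j * Q k j) + (-(1/2)) * (Q l i * Q l i * Q k j * Q l j)
        + (1/4) * (Q l i * Q l i * Q l j * Q l j) := by
    intro Q
    linear_combination ((cc * cc + 1/2) * ((Q l i - Q k i) * (Q l j - Q k j))^2) * cc_sq
  have hidC : ∀ Q : QS m, (cc * Q k i + cc * Q l i) * (cc * Q k i + cc * Q l i) *
      (cc * Q l j - cc * Q k j) * (cc * Q l j - cc * Q k j)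
      = (1/4) * (Q k i * Q k i * Q k j * Q k j) + (-(1/2)) * (Q k i * Q k i * Q k j * Q l j)
        + (1/4) * (Q k i * Q k i * Q l j * Q l j) + (1/2) * (Q k i * Q l i * Q k j * Q k j)
        + (-1) * (Q k i * Q k j * Q l i * Q l j) + (1/2) * (Q k i * Q l i * Q l j * Q l j)
        + (1/4) * (Q l i * Q l i * Q k j * Q k j) + (-(1/2)) * (Q l i * Q l i * Q k j * Q l j)
        + (1/4) * (Q l i * Q l i * Q l j * Q l j) := by
    intro Q
    linear_combination ((cc * cc + 1/2) * ((Q k i + Q l i) * (Q l j - Q k j))^2) * cc_sq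
  have hidD : ∀ Q : QS m, (cc * Q l i - cc * Q k i) * (cc * Q l i - cc * Q k i) *
      (cc * Q k j + cc * Q l j) * (cc * Q k j + cc * Q l j)
      = (1/4) * (Q k i * Q k i * Q k j * Q k j) + (1/2) * (Q k i * Q k i * Q k j * Q l j)
        + (1/4) * (Q k i * Q k i * Q l j * Q l j) + (-(1/2)) * (Q k i * Q l i * Q k j * Q k j)
        + (-1) * (Q k i * Q k j * Q l i * Q l j) + (-(1/2)) * (Q k i * Q l i * Q l j * Q l j)
        + (1/4) * (Q l i * Q l i * Q k j * Q k j) + (1/2) * (Q l i * Q l i * Q k j * Q l j)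
        + (1/4) * (Q l i * Q l i * Q l j * Q l j) := by
    intro Q
    linear_combination ((cc * cc + 1/2) * ((Q l i - Q k i) * (Q k j + Q l j))^2) * cc_sq
  simp only [hidA] at eA
  simp only [hidB] at eB
  simp only [hidC] at eC
  simp only [hidD] at eD
  rw [isplit9 _ _ _ _ _ _ _ _ _ (ints k i k i k j k j) (ints k i k i k j l j)
    (ints k i k i l j l j) (ints k i l i k j k j) (ints k i k j l i l j)
    (ints k i l i l j l j) (ints l i l i k j k j) (ints l i l i k j l j)
    (ints l i l i l j l j)] at eA eB eC eD
  rw [z2, z4, z6, z8] at eA eB eC eD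
  refine ⟨by linarith, by linarith, by linarith⟩

end TwoCol

lemma E_transfer (h : Good m μ) (i j : Fin m) {k l l' : Fin m}
    (hk1 : l ≠ k) (hk2 : l' ≠ k) (hll' : l ≠ l') :
    ∫ Q, Q k i * Q k j * Q l i * Q l j ∂μ = ∫ Q, Q k i * Q k j * Q l' i * Q l' j ∂μ := by
  have z2 : ∫ Q, Q k i * Q k j * Q l i * Q l' j ∂μ = 0 :=
    odd_zero4 h l' k i k j l i l' j (by simp [Ne.symm hk2, hll'])
  have z3 : ∫ Q, Q k i * Q k j * Q l' i * Q l j ∂μ = 0 :=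
    odd_zero4 h l k i k j l' i l j (by simp [Ne.symm hk1, Ne.symm hll'])
  have e1 := rot_inv h hll' (fun Q => Q k i * Q k j * Q l i * Q l j) (by fun_prop)
  have hsub : ∀ (Q : QS m) (i'' : Fin m), rsub l l' Q k i'' = Q k i'' :=
    fun Q i'' => rsub_o (Ne.symm hk1) (Ne.symm hk2) Q i''
  simp only [hsub, rsub_k] at e1
  have hid : ∀ Q : QS m, Q k i * Q k j * (cc * Q l i + cc * Q l' i) * (cc * Q l j + cc * Q l' j)
      = (1/2) * (Q k i * Q k j * Q l i * Q l j) + (1/2) * (Q k i * Q k j * Q l i * Q l' j)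
        + (1/2) * (Q k i * Q k j * Q l' i * Q l j)
        + (1/2) * (Q k i * Q k j * Q l' i * Q l' j) := by
    intro Q
    linear_combination (Q k i * Q k j * (Q l i + Q l' i) * (Q l j + Q l' j)) * cc_sq
  simp only [hid] at e1
  rw [isplit4 _ _ _ _ (int4 h k i k j l i l j) (int4 h k i k j l i l' j)
    (int4 h k i k j l' i l j) (int4 h k i k j l' i l' j)] at e1
  rw [z2, z3] at e1
  linarith

lemma E_symm (h : Good m μ) (i j k l : Fin m) :
    ∫ Q, Q k i * Q k j * Q l i * Q l j ∂μ = ∫ Q, Q l i * Q l j * Q k i * Q k j ∂μ := by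
  have : (fun Q : QS m => Q k i * Q k j * Q l i * Q l j)
      = fun Q => Q l i * Q l j * Q k i * Q k j := funext fun Q => by ring
  rw [this]

lemma E_const (h : Good m μ) (i j : Fin m) {k l k' l' : Fin m} (hkl : k ≠ l) (hk'l' : k' ≠ l') :
    ∫ Q, Q k i * Q k j * Q l i * Q l j ∂μ = ∫ Q, Q k' i * Q k' j * Q l' i * Q l' j ∂μ := by
  have same_first : ∀ a b b' : Fin m, b ≠ a → b' ≠ a →
      ∫ Q, Q a i * Q a j * Q b i * Q b j ∂μ = ∫ Q, Q a i * Q a j * Q b' i * Q b' j ∂μ := by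
    intro a b b' hb hb'
    by_cases hbb : b = b'
    · rw [hbb]
    · exact E_transfer h i j hb hb' hbb
  by_cases hkk : k = k'
  · subst hkk
    exact same_first k l l' (Ne.symm hkl) (Ne.symm hk'l')
  · calc ∫ Q, Q k i * Q k j * Q l i * Q l j ∂μ
        = ∫ Q, Q k i * Q k j * Q k' i * Q k' j ∂μ :=
          same_first k l k' (Ne.symm hkl) (Ne.symm hkk)
      _ = ∫ Q, Q k' i * Q k' j * Q k i * Q k j ∂μ := E_symm h i j k k'
      _ = ∫ Q, Q k' i * Q k' j * Q l' i * Q l' j ∂μ :=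
          same_first k' k l' hkk (Ne.symm hk'l')

lemma DE_val (h : Good m μ) (hm : 2 ≤ m) {i j : Fin m} (hij : i ≠ j) {k l : Fin m} (hkl : k ≠ l) :
    (∫ Q, Q k i * Q k i * Q k j * Q k j ∂μ) = 1 / ((m:ℝ) * ((m:ℝ) + 2)) ∧
    (∫ Q, Q k i * Q k j * Q l i * Q l j ∂μ)
      = -(1 / (((m:ℝ) - 1) * ((m:ℝ) * ((m:ℝ) + 2)))) := by
  haveI := h.prob
  set D : ℝ := ∫ Q, Q k i * Q k i * Q k j * Q k j ∂μ with hD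
  set E : ℝ := ∫ Q, Q k i * Q k j * Q l i * Q l j ∂μ with hE
  -- orthogonality constraint : D + (m-1) E = 0
  have hCO : D + ((m:ℝ) - 1) * E = 0 := by
    have hzero : ∀ᵐ Q ∂μ, (∑ l', Q k i * Q k j * Q l' i * Q l' j) = 0 := by
      filter_upwards [h.hae] with Q hQ
      have h0 := hQ i j
      rw [if_neg hij] at h0
      have : (∑ l', Q k i * Q k j * Q l' i * Q l' j)
          = Q k i * Q k j * (∑ l', Q l' i * Q l' j) := by
        rw [Finset.mul_sum]
        exact Finset.sum_congr rfl fun l' _ => by ring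
      rw [this, h0, mul_zero]
    have hsum0 : ∑ l', ∫ Q, Q k i * Q k j * Q l' i * Q l' j ∂μ = 0 := by
      rw [← integral_finset_sum _ (fun l' _ => int4 h k i k j l' i l' j)]
      exact integral_eq_zero_of_ae hzero
    rw [← Finset.add_sum_erase _ _ (Finset.mem_univ k)] at hsum0
    have hdiag : ∫ Q, Q k i * Q k j * Q k i * Q k j ∂μ = D := by
      rw [hD]
      congr 1
      exact funext fun Q => by ring
    have hoff : ∑ l' ∈ univ.erase k, ∫ Q, Q k i * Q k j * Q l' i * Q l' j ∂μ
        = ((m:ℝ) - 1) * E := by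
      rw [Finset.sum_congr rfl (fun l' hl' =>
        E_const h i j (Ne.symm (Finset.mem_erase.1 hl').1) hkl)]
      rw [Finset.sum_const, Finset.card_erase_of_mem (Finset.mem_univ k),
        Finset.card_univ, Fintype.card_fin, nsmul_eq_mul]
      push_cast [Nat.cast_sub (by omega : 1 ≤ m)]
      ring
    rw [hdiag, hoff] at hsum0
    exact hsum0
  -- normalization constraint : D + (m-1)(D - 2E) = 1/m
  have hCN : D + ((m:ℝ) - 1) * (D - 2 * E) = 1 / (m:ℝ) := by
    have hone : ∀ᵐ Q ∂μ, (∑ l', Q k i * Q k i * Q l' j * Q l' j)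
        = Q k i * Q k i := by
      filter_upwards [h.hae] with Q hQ
      have h1 := hQ j j
      rw [if_pos rfl] at h1
      have : (∑ l', Q k i * Q k i * Q l' j * Q l' j)
          = Q k i * Q k i * (∑ l', Q l' j * Q l' j) := by
        rw [Finset.mul_sum]
        exact Finset.sum_congr rfl fun l' _ => by ring
      rw [this, h1, mul_one]
    have hsum1 : ∑ l', ∫ Q, Q k i * Q k i * Q l' j * Q l' j ∂μ = 1 / (m:ℝ) := by
      rw [← integral_finset_sum _ (fun l' _ => int4 h k i k i l' j l' j),
        integral_congr_ae hone, m2_val h hm k i]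
    rw [← Finset.add_sum_erase _ _ (Finset.mem_univ k)] at hsum1
    have hterm : ∀ l' ∈ univ.erase k,
        ∫ Q, Q k i * Q k i * Q l' j * Q l' j ∂μ = D - 2 * E := by
      intro l' hl'
      have hne : k ≠ l' := Ne.symm (Finset.mem_erase.1 hl').1
      have hr := (two_col_rels h i j hne).2.2
      have hEc : ∫ Q, Q k i * Q k j * Q l' i * Q l' j ∂μ = E := E_const h i j hne hkl
      rw [hEc] at hr
      rw [← hD] at hr
      linarith
    have hoff : ∑ l' ∈ univ.erase k, ∫ Q, Q k i * Q k i * Q l' j * Q l' j ∂μ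
        = ((m:ℝ) - 1) * (D - 2 * E) := by
      rw [Finset.sum_congr rfl hterm, Finset.sum_const,
        Finset.card_erase_of_mem (Finset.mem_univ k),
        Finset.card_univ, Fintype.card_fin, nsmul_eq_mul]
      push_cast [Nat.cast_sub (by omega : 1 ≤ m)]
      ring
    rw [hoff] at hsum1
    exact hsum1
  have hm' : (2:ℝ) ≤ (m:ℝ) := by exact_mod_cast hm
  have hne : (m:ℝ) ≠ 0 := by linarith
  have hne1 : (m:ℝ) - 1 ≠ 0 := by linarith
  have hne2 : (m:ℝ) + 2 ≠ 0 := by linarith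
  have hCN' : (m:ℝ) * (D + ((m:ℝ) - 1) * (D - 2 * E)) = 1 := by
    rw [hCN]
    field_simp
  have h1 : D * ((m:ℝ) * ((m:ℝ) + 2)) = 1 := by
    linear_combination hCN' + 2 * (m:ℝ) * hCO
  have h2 : E * (((m:ℝ) - 1) * ((m:ℝ) * ((m:ℝ) + 2))) = -1 := by
    linear_combination ((m:ℝ) * ((m:ℝ) + 2)) * hCO - h1
  constructor
  · rw [eq_div_iff (mul_ne_zero hne hne2)]
    linear_combination h1
  · have hprod : ((m:ℝ) - 1) * ((m:ℝ) * ((m:ℝ) + 2)) ≠ 0 :=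
      mul_ne_zero hne1 (mul_ne_zero hne hne2)
    field_simp
    linear_combination h2

/-- master fourth-moment evaluation -/
lemma Mx_eval (h : Good m μ) (hm : 2 ≤ m) (i j k l : Fin m) :
    ∫ Q, Q k i * Q k j * Q l i * Q l j ∂μ =
      if i = j then
        (if k = l then 3 / ((m:ℝ) * ((m:ℝ) + 2)) else 1 / ((m:ℝ) * ((m:ℝ) + 2)))
      else
        (if k = l then 1 / ((m:ℝ) * ((m:ℝ) + 2))
          else -(1 / (((m:ℝ) - 1) * ((m:ℝ) * ((m:ℝ) + 2))))) := by
  by_cases hij : i = j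
  · subst hij
    rw [if_pos rfl]
    by_cases hkl : k = l
    · subst hkl
      rw [if_pos rfl]
      exact m4_val h hm i k
    · rw [if_neg hkl]
      exact c22_val h hm hkl i
  · rw [if_neg hij]
    by_cases hkl : k = l
    · subst hkl
      rw [if_pos rfl]
      have hD : ∫ Q, Q k i * Q k i * Q k j * Q k j ∂μ = 1 / ((m:ℝ) * ((m:ℝ) + 2)) := by
        haveI : Nontrivial (Fin m) := Fin.nontrivial_iff_two_le.2 hm
        obtain ⟨l', hl'⟩ := exists_ne k (α := Fin m)
        exact (DE_val h hm hij (Ne.symm hl')).1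
      rw [← hD]
      congr 1
      exact funext fun Q => by ring
    · rw [if_neg hkl]
      exact (DE_val h hm hij hkl).2

lemma sum_pair (c : Fin m → ℝ) (X Y : ℝ) :
    ∑ k, ∑ l, (c k * c l * (if k = l then X else Y))
      = (∑ k, c k * c k) * X + ((∑ k, c k) * (∑ k, c k) - ∑ k, c k * c k) * Y := by
  have hpt : ∀ k l : Fin m, c k * c l * (if k = l then X else Y)
      = c k * c l * Y + (if k = l then c k * c l * (X - Y) else 0) := by
    intro k l
    split_ifs <;> ring
  simp only [hpt, Finset.sum_add_distrib]
  rw [Finset.sum_congr rfl (fun k _ => Finset.sum_ite_eq univ k (fun l => c k * c l * (X - Y)))]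
  simp only [Finset.mem_univ, if_true]
  have h1 : ∑ k : Fin m, ∑ l : Fin m, c k * c l * Y = ((∑ k, c k) * (∑ k, c k)) * Y := by
    rw [Finset.sum_mul_sum, Finset.sum_mul]
    exact Finset.sum_congr rfl fun k _ => by
      rw [Finset.sum_mul]
  rw [h1]
  have h2 : ∑ x : Fin m, c x * c x * (X - Y) = (∑ x : Fin m, c x * c x) * (X - Y) := by
    rw [← Finset.sum_mul]
  rw [h2]
  ring

end IsoAux

open IsoAux in
theorem isotropic_fourth_moment_closed_form (m : ℕ) (hm : 2 ≤ m)
    (μ : Measure (Fin m → Fin m → ℝ)) [IsProbabilityMeasure μ]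
    (hsupp : μ {Q | (Matrix.of Q)ᵀ * Matrix.of Q = 1} = 1)
    (hinv : ∀ P : Matrix (Fin m) (Fin m) ℝ, Pᵀ * P = 1 →
      μ.map (fun Q => Matrix.of.symm (P * Matrix.of Q)) = μ)
    (a b : Fin m → ℝ) :
    ∫ Q, ((diagonal a * (Matrix.of Q)ᵀ * diagonal b * Matrix.of Q) ^ 2).trace ∂μ =
      (3 * (∑ i, (a i) ^ 2) * (∑ i, (b i) ^ 2) +
        (∑ i, (a i) ^ 2) * ((∑ i, b i) ^ 2 - ∑ i, (b i) ^ 2) +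
        (∑ i, (b i) ^ 2) * ((∑ i, a i) ^ 2 - ∑ i, (a i) ^ 2) -
        ((∑ i, a i) ^ 2 - ∑ i, (a i) ^ 2) *
          ((∑ i, b i) ^ 2 - ∑ i, (b i) ^ 2) / ((m : ℝ) - 1)) /
      ((m : ℝ) * ((m : ℝ) + 2)) := by
  classical
  -- membership in the orthogonality set is measurable
  have hS_eq : {Q : Fin m → Fin m → ℝ | (Matrix.of Q)ᵀ * Matrix.of Q = 1}
      = ⋂ (i : Fin m), ⋂ (j : Fin m),
        {Q : Fin m → Fin m → ℝ |
          (∑ k, Q k i * Q k j) = (1 : Matrix (Fin m) (Fin m) ℝ) i j} := by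
    ext Q
    simp only [Set.mem_setOf_eq, Set.mem_iInter]
    constructor
    · intro hQ i j
      rw [← hQ, Matrix.mul_apply]
      rfl
    · intro hQ
      ext i j
      rw [Matrix.mul_apply]
      exact hQ i j
  have hS_meas : MeasurableSet {Q : Fin m → Fin m → ℝ | (Matrix.of Q)ᵀ * Matrix.of Q = 1} := by
    rw [hS_eq]
    refine MeasurableSet.iInter fun i => MeasurableSet.iInter fun j => ?_
    refine measurableSet_eq_fun ?_ measurable_const
    apply Finset.measurable_sum
    intro k _
    exact Measurable.mul (f := fun Q : Fin m → Fin m → ℝ => Q k i)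
      (g := fun Q : Fin m → Fin m → ℝ => Q k j)
      ((measurable_pi_apply i).comp (measurable_pi_apply k))
      ((measurable_pi_apply j).comp (measurable_pi_apply k))
  have haeS : ∀ᵐ Q ∂μ, (Matrix.of Q)ᵀ * Matrix.of Q = 1 := by
    have hc := measure_compl hS_meas (measure_ne_top μ _)
    rw [hsupp, measure_univ, tsub_self] at hc
    rw [MeasureTheory.ae_iff]
    exact hc
  have hGood : Good m μ := by
    refine ⟨inferInstance, ?_, ?_⟩
    · filter_upwards [haeS] with Q hQ i j
      have h1 := congrFun (congrFun hQ i) j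
      rw [Matrix.mul_apply, Matrix.one_apply] at h1
      exact h1
    · intro P hP f hf
      have hfun : ∀ Q : Fin m → Fin m → ℝ,
          Matrix.of.symm (P * Matrix.of Q) = fun r i => ∑ s, P r s * Q s i := by
        intro Q
        funext r i'
        simp [Matrix.mul_apply]
      have hg : Measurable (fun Q : Fin m → Fin m → ℝ => Matrix.of.symm (P * Matrix.of Q)) := by
        simp only [hfun]
        apply measurable_pi_lambda
        intro r
        apply measurable_pi_lambda
        intro i'
        apply Finset.measurable_sum
        intro s _
        exact measurable_const.mul ((measurable_pi_apply i').comp (measurable_pi_apply s))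
      have hmap := hinv P hP
      have hsm : AEStronglyMeasurable f
          (μ.map (fun Q => Matrix.of.symm (P * Matrix.of Q))) := by
        rw [hmap]
        exact hf.aestronglyMeasurable
      have hkey := MeasureTheory.integral_map hg.aemeasurable hsm
      rw [hmap] at hkey
      simp only [hfun] at hkey
      exact hkey.symm
  -- expand the trace into a quadruple sum
  have htr : ∀ Q : Fin m → Fin m → ℝ,
      ((diagonal a * (Matrix.of Q)ᵀ * diagonal b * Matrix.of Q) ^ 2).trace
      = ∑ i, ∑ j, ∑ k, ∑ l, a i * a j * b k * b l * (Q k i * Q k j * Q l i * Q l j) := by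
    intro Q
    have hM : ∀ (i j : Fin m), (diagonal a * (Matrix.of Q)ᵀ * diagonal b * Matrix.of Q) i j
        = ∑ k, a i * Q k i * b k * Q k j := by
      intro i j
      rw [Matrix.mul_apply]
      refine Finset.sum_congr rfl fun k _ => ?_
      rw [Matrix.mul_diagonal, Matrix.diagonal_mul]
      simp only [Matrix.transpose_apply, Matrix.of_apply]
    rw [pow_two, Matrix.trace]
    refine Finset.sum_congr rfl fun i _ => ?_
    rw [Matrix.diag_apply, Matrix.mul_apply]
    refine Finset.sum_congr rfl fun j _ => ?_
    rw [hM i j, hM j i, Finset.sum_mul_sum]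
    exact Finset.sum_congr rfl fun k _ => Finset.sum_congr rfl fun l _ => by ring
  simp only [htr]
  have hint4 : ∀ i j k l : Fin m, Integrable
      (fun Q : Fin m → Fin m → ℝ =>
        a i * a j * b k * b l * (Q k i * Q k j * Q l i * Q l j)) μ :=
    fun i j k l => (int4 hGood k i k j l i l j).const_mul _
  rw [integral_finset_sum _ (fun i _ => integrable_finset_sum _ fun j _ =>
    integrable_finset_sum _ fun k _ => integrable_finset_sum _ fun l _ => hint4 i j k l)]
  have e3 : ∀ i : Fin m, ∫ Q, (∑ j, ∑ k, ∑ l,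
      a i * a j * b k * b l * (Q k i * Q k j * Q l i * Q l j)) ∂μ
      = ∑ j, ∫ Q, (∑ k, ∑ l, a i * a j * b k * b l * (Q k i * Q k j * Q l i * Q l j)) ∂μ :=
    fun i => integral_finset_sum _ (fun j _ => integrable_finset_sum _ fun k _ =>
      integrable_finset_sum _ fun l _ => hint4 i j k l)
  have e2 : ∀ i j : Fin m, ∫ Q, (∑ k, ∑ l,
      a i * a j * b k * b l * (Q k i * Q k j * Q l i * Q l j)) ∂μ
      = ∑ k, ∫ Q, (∑ l, a i * a j * b k * b l * (Q k i * Q k j * Q l i * Q l j)) ∂μ :=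
    fun i j => integral_finset_sum _ (fun k _ => integrable_finset_sum _ fun l _ => hint4 i j k l)
  have e1 : ∀ i j k : Fin m, ∫ Q, (∑ l,
      a i * a j * b k * b l * (Q k i * Q k j * Q l i * Q l j)) ∂μ
      = ∑ l, ∫ Q, a i * a j * b k * b l * (Q k i * Q k j * Q l i * Q l j) ∂μ :=
    fun i j k => integral_finset_sum _ (fun l _ => hint4 i j k l)
  simp only [e3, e2, e1, integral_const_mul, Mx_eval hGood hm]
  -- now a purely algebraic computation
  have hm' : (2:ℝ) ≤ (m:ℝ) := by exact_mod_cast hm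
  have hne : (m:ℝ) ≠ 0 := by linarith
  have hne1 : (m:ℝ) - 1 ≠ 0 := by linarith
  have hne2 : (m:ℝ) + 2 ≠ 0 := by linarith
  set p : ℝ := 3 / ((m:ℝ) * ((m:ℝ) + 2)) with hp
  set p1 : ℝ := 1 / ((m:ℝ) * ((m:ℝ) + 2)) with hp1
  set q : ℝ := -(1 / (((m:ℝ) - 1) * ((m:ℝ) * ((m:ℝ) + 2)))) with hq
  set WA : ℝ := (∑ k, b k * b k) * p + ((∑ k, b k) * (∑ k, b k) - ∑ k, b k * b k) * p1 with hWA
  set WB : ℝ := (∑ k, b k * b k) * p1 + ((∑ k, b k) * (∑ k, b k) - ∑ k, b k * b k) * q with hWB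
  have hstep : ∀ i j : Fin m,
      (∑ k, ∑ l, a i * a j * b k * b l *
        (if i = j then (if k = l then p else p1) else (if k = l then p1 else q)))
      = a i * a j * (if i = j then WA else WB) := by
    intro i j
    have hpull : ∀ X Y : ℝ, (∑ k, ∑ l, a i * a j * b k * b l * (if k = l then X else Y))
        = a i * a j * ∑ k, ∑ l, (b k * b l * (if k = l then X else Y)) := by
      intro X Y
      rw [Finset.mul_sum]
      refine Finset.sum_congr rfl fun k _ => ?_
      rw [Finset.mul_sum]
      exact Finset.sum_congr rfl fun l _ => by ring
    by_cases hij : i = j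
    · simp only [if_pos hij]
      rw [hpull p p1, sum_pair b p p1]
    · simp only [if_neg hij]
      rw [hpull p1 q, sum_pair b p1 q]
  simp only [hstep]
  rw [sum_pair a WA WB]
  have hsq : ∀ c : Fin m → ℝ, (∑ i, (c i)^2) = ∑ i, c i * c i := by
    intro c
    exact Finset.sum_congr rfl fun i _ => sq (c i) ▸ by ring
  rw [hsq a, hsq b, hWA, hWB, hp, hp1, hq]
  field_simp
  ring
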